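/- Let $t \geq 2$, let $S = \{n_1, \ldots, n_t\}$ be a set of integers with $\min(S) \geq 3$, and let $s_1, \ldots, s_t$ be arbitrary positive integers. Then there exists a 3-uniform bi-hypergraph $\mathcal{H}$ whose feasible set is exactly $S$ and which has exactly $s_i$ feasible partitions into $n_i$ classes for each $i \in [t]$. -/

import Mathlib

/-- Feasible partition (proper coloring) of a bi-hypergraph. -/
def ProperSetoid {X : Type*} (E : Set (Finset X)) (P : Setoid X) : Prop :=
  ∀ b ∈ E, (∃ x ∈ b, ∃ y ∈ b, x ≠ y ∧ P x y) ∧ (∃ x ∈ b, ∃ y ∈ b, ¬ P x y)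

namespace Stmt5

lemma proper_of {X γ : Type*} [DecidableEq X] {a b c : X} (f : X → γ)
    (h1 : a ≠ b) (h2 : a ≠ c) (h3 : b ≠ c)
    (hg : (f a = f b ∨ f a = f c ∨ f b = f c) ∧ ¬(f a = f b ∧ f a = f c)) :
    (∃ x ∈ ({a, b, c} : Finset X), ∃ y ∈ ({a, b, c} : Finset X), x ≠ y ∧ Setoid.ker f x y) ∧
      (∃ x ∈ ({a, b, c} : Finset X), ∃ y ∈ ({a, b, c} : Finset X), ¬ Setoid.ker f x y) := by
  have ma : a ∈ ({a, b, c} : Finset X) := by simp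
  have mb : b ∈ ({a, b, c} : Finset X) := by simp
  have mc : c ∈ ({a, b, c} : Finset X) := by simp
  constructor
  · rcases hg.1 with h | h | h
    · exact ⟨a, ma, b, mb, h1, Setoid.ker_def.mpr h⟩
    · exact ⟨a, ma, c, mc, h2, Setoid.ker_def.mpr h⟩
    · exact ⟨b, mb, c, mc, h3, Setoid.ker_def.mpr h⟩
  · rcases not_and_or.mp hg.2 with h | h
    · exact ⟨a, ma, b, mb, fun hh => h (Setoid.ker_def.mp hh)⟩
    · exact ⟨a, ma, c, mc, fun hh => h (Setoid.ker_def.mp hh)⟩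

abbrev Slt (B : Type) (Λ : B → ℕ) := Σ b, Fin (Λ b)

inductive Vtx (K : ℕ) (B : Type) (Λ : B → ℕ) : Type where
  | C : Fin 3 → Vtx K B Λ
  | D : Fin 2 → Vtx K B Λ
  | H : Fin 2 → Vtx K B Λ
  | O : Fin K → Fin 2 → Vtx K B Λ
  | Z : B → Vtx K B Λ
  | W : Slt B Λ → Fin 2 → Vtx K B Λ
deriving DecidableEq, Fintype

@[reducible] def Act (B : Type) (Λ : B → ℕ) : Option B → Type
  | none => PEmpty
  | some b0 => {τ : Slt B Λ // τ.1 = b0}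

abbrev Col (K : ℕ) (B : Type) (Λ : B → ℕ) (o : Option B) : Type :=
  Fin 3 ⊕ Fin K ⊕ Act B Λ o

namespace Vtx

variable {K : ℕ} {B : Type} {Λ : B → ℕ}

inductive Edg : Vtx K B Λ → Vtx K B Λ → Vtx K B Λ → Prop where
  | coreA (i j : Fin 3) (h : i ≠ j) (k : Fin 2) : Edg (C i) (C j) (D k)
  | coreB (i : Fin 3) : Edg (C i) (D 0) (D 1)
  | hubD (j : Fin 2) : Edg (H j) (D 0) (D 1)
  | isoD (j : Fin K) (ε : Fin 2) : Edg (O j ε) (D 0) (D 1)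
  | selD (b : B) : Edg (Z b) (D 0) (D 1)
  | slotD (τ : Slt B Λ) (ε : Fin 2) : Edg (W τ ε) (D 0) (D 1)
  | hubC (j : Fin 2) : Edg (H j) (C 0) (C 1)
  | hubEq : Edg (H 0) (H 1) (C 0)
  | isoC (j : Fin K) (ε : Fin 2) : Edg (O j ε) (C 0) (C 1)
  | isoEq (j : Fin K) : Edg (O j 0) (O j 1) (C 0)
  | isoH (j : Fin K) : Edg (O j 0) (O j 1) (H 0)
  | isoIso (j k : Fin K) (h : j ≠ k) : Edg (O j 0) (O j 1) (O k 0)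
  | isoSlot (j : Fin K) (τ : Slt B Λ) (ε : Fin 2) : Edg (O j 0) (O j 1) (W τ ε)
  | hubSlot (τ : Slt B Λ) : Edg (H 0) (H 1) (W τ 1)
  | selHub (b : B) : Edg (Z b) (H 0) (C 0)
  | selSel (b b' : B) (h : b ≠ b') : Edg (Z b) (Z b') (C 0)
  | xC (τ : Slt B Λ) : Edg (W τ 0) (C 0) (C 1)
  | wz (τ : Slt B Λ) : Edg (W τ 1) (Z τ.1) (C 0)
  | xz (τ : Slt B Λ) : Edg (W τ 0) (Z τ.1) (C 0)
  | xw (τ : Slt B Λ) : Edg (W τ 0) (W τ 1) (C 0)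
  | slotSlot (τ υ : Slt B Λ) (h : τ.1 = υ.1) (hne : τ ≠ υ) (ε : Fin 2) :
      Edg (W τ 0) (W τ 1) (W υ ε)

lemma edg_ne {a b c : Vtx K B Λ} (h : Edg a b c) : a ≠ b ∧ a ≠ c ∧ b ≠ c := by
  cases h <;> refine ⟨?_, ?_, ?_⟩ <;> simp_all

variable [DecidableEq B]

def ES : Set (Finset (Vtx K B Λ)) := {e | ∃ a b c, Edg a b c ∧ e = {a, b, c}}

lemma card_three {a b c : Vtx K B Λ} (h : Edg a b c) :
    ({a, b, c} : Finset (Vtx K B Λ)).card = 3 := by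
  obtain ⟨h1, h2, h3⟩ := edg_ne h
  exact Finset.card_eq_three.mpr ⟨a, b, c, h1, h2, h3, rfl⟩

def colf : (o : Option B) → Vtx K B Λ → Col K B Λ o
  | _, C _ => Sum.inl 0
  | _, D _ => Sum.inl 1
  | _, H _ => Sum.inl 2
  | _, O j _ => Sum.inr (Sum.inl j)
  | none, Z _ => Sum.inl 2
  | some b0, Z b => if b = b0 then Sum.inl 0 else Sum.inl 2
  | none, W _ ε => if ε = 1 then Sum.inl 0 else Sum.inl 2
  | some b0, W τ ε =>
      if h : τ.1 = b0 then Sum.inr (Sum.inr ⟨τ, h⟩) else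
        if ε = 1 then Sum.inl 0 else Sum.inl 2

theorem properS (o : Option B) : ProperSetoid ES (Setoid.ker (colf (K := K) (Λ := Λ) o)) := by
  rintro e ⟨a, b, c, hedg, rfl⟩
  obtain ⟨n1, n2, n3⟩ := edg_ne hedg
  refine proper_of _ n1 n2 n3 ?_
  cases hedg <;> cases o <;>
      simp_all [colf, Fin.ext_iff, Subtype.ext_iff]
  all_goals try split_ifs
  all_goals try simp_all [Fin.ext_iff, Subtype.mk.injEq]
  all_goals first
    | tauto
    | (rename_i hne h; exact fun a => hne (congrArg Subtype.val a))

lemma mem_ES {a b c : Vtx K B Λ} (h : Edg a b c) :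
    ({a, b, c} : Finset (Vtx K B Λ)) ∈ ES := ⟨a, b, c, h, rfl⟩

lemma edge_facts {P : Setoid (Vtx K B Λ)} (hP : ProperSetoid ES P)
    {a b c : Vtx K B Λ} (h : Edg a b c) :
    (P a b ∨ P a c ∨ P b c) ∧ ¬(P a b ∧ P a c) := by
  obtain ⟨⟨x, hx, y, hy, hxy, hPxy⟩, ⟨u, hu, v, hv, hPuv⟩⟩ := hP _ (mem_ES h)
  simp only [Finset.mem_insert, Finset.mem_singleton] at hx hy hu hv
  constructor
  · rcases hx with rfl | rfl | rfl <;> rcases hy with rfl | rfl | rfl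
    · exact absurd rfl hxy
    · exact Or.inl hPxy
    · exact Or.inr (Or.inl hPxy)
    · exact Or.inl (Setoid.symm hPxy)
    · exact absurd rfl hxy
    · exact Or.inr (Or.inr hPxy)
    · exact Or.inr (Or.inl (Setoid.symm hPxy))
    · exact Or.inr (Or.inr (Setoid.symm hPxy))
    · exact absurd rfl hxy
  · rintro ⟨h1, h2⟩
    have hbc : P b c := Setoid.trans (Setoid.symm h1) h2
    apply hPuv
    rcases hu with rfl | rfl | rfl <;> rcases hv with rfl | rfl | rfl
    · exact Setoid.refl _
    · exact h1
    · exact h2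
    · exact Setoid.symm h1
    · exact Setoid.refl _
    · exact hbc
    · exact Setoid.symm h2
    · exact Setoid.symm hbc
    · exact Setoid.refl _

/-- representative of each color -/
def rep (b0ca : Option B) : Col K B Λ b0ca → Vtx K B Λ :=
  fun u => match u with
  | .inl i => if i.val = 0 then C 0 else if i.val = 1 then D 0 else H 0
  | .inr (.inl j) => O j 0
  | .inr (.inr p) =>
      match b0ca, p with
      | some _, p => W p.1 0

theorem classify {P : Setoid (Vtx K B Λ)} (hP : ProperSetoid ES P) :
    ∃ o : Option B, P = Setoid.ker (colf o) := by
  have F : ∀ {a b c : Vtx K B Λ}, Edg a b c →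
      (P a b ∨ P a c ∨ P b c) ∧ ¬(P a b ∧ P a c) := fun h => edge_facts hP h
  -- core analysis
  have hDD : P (D 0) (D 1) := by
    by_cases hdd : P (D 0) (D 1)
    · exact hdd
    exfalso
    have pick : ∀ i : Fin 3, P (C i) (D 0) ∨ P (C i) (D 1) := by
      intro i
      rcases (F (Edg.coreB i)).1 with h | h | h
      · exact Or.inl h
      · exact Or.inr h
      · exact absurd h hdd
    have clash : ∀ (i j : Fin 3), i ≠ j → ∀ k, P (C i) (D k) → P (C j) (D k) → False := by
      intro i j hij k h1 h2
      exact (F (Edg.coreA i j hij k)).2 ⟨Setoid.trans h1 (Setoid.symm h2), h1⟩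
    rcases pick 0 with h0 | h0 <;> rcases pick 1 with h1 | h1 <;> rcases pick 2 with h2 | h2
    · exact clash 0 1 (by decide) 0 h0 h1
    · exact clash 0 1 (by decide) 0 h0 h1
    · exact clash 0 2 (by decide) 0 h0 h2
    · exact clash 1 2 (by decide) 1 h1 h2
    · exact clash 1 2 (by decide) 0 h1 h2
    · exact clash 0 2 (by decide) 1 h0 h2
    · exact clash 0 1 (by decide) 1 h0 h1
    · exact clash 0 1 (by decide) 1 h0 h1
  have hCD : ∀ (i : Fin 3) (k : Fin 2), ¬ P (C i) (D k) := by
    intro i k hik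
    have h2 := (F (Edg.coreB i)).2
    fin_cases k
    · exact h2 ⟨hik, Setoid.trans hik hDD⟩
    · exact h2 ⟨Setoid.trans hik (Setoid.symm hDD), hik⟩
  have hCC : ∀ i j : Fin 3, P (C i) (C j) := by
    intro i j
    by_cases hij : i = j
    · exact hij ▸ Setoid.refl _
    rcases (F (Edg.coreA i j hij 0)).1 with h | h | h
    · exact h
    · exact absurd h (hCD i 0)
    · exact absurd h (hCD j 0)
  -- not in D
  have hnD : ∀ v : Vtx K B Λ, Edg v (D 0) (D 1) → ¬ P v (D 0) ∧ ¬ P v (D 1) := by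
    intro v he
    have h2 := (F he).2
    constructor
    · intro h; exact h2 ⟨h, Setoid.trans h hDD⟩
    · intro h; exact h2 ⟨Setoid.trans h (Setoid.symm hDD), h⟩
  -- not in C
  have hnC : ∀ v : Vtx K B Λ, Edg v (C 0) (C 1) → ¬ P v (C 0) := by
    intro v he h
    exact (F he).2 ⟨h, Setoid.trans h (hCC 0 1)⟩
  have hHC : ¬ P (H 0) (C 0) := hnC _ (Edg.hubC 0)
  have hH1C : ¬ P (H 1) (C 0) := hnC _ (Edg.hubC 1)
  have hOC : ∀ (j : Fin K) (ε : Fin 2), ¬ P (O j ε) (C 0) := fun j ε => hnC _ (Edg.isoC j ε)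
  have hXC : ∀ τ : Slt B Λ, ¬ P (W τ 0) (C 0) := fun τ => hnC _ (Edg.xC τ)
  -- forced pairs
  have hHH : P (H 0) (H 1) := by
    rcases (F Edg.hubEq).1 with h | h | h
    · exact h
    · exact absurd h hHC
    · exact absurd h hH1C
  have hOO : ∀ j : Fin K, P (O j 0) (O j 1) := by
    intro j
    rcases (F (Edg.isoEq j)).1 with h | h | h
    · exact h
    · exact absurd h (hOC j 0)
    · exact absurd h (hOC j 1)
  -- noneq gadgets
  have hOH : ∀ j : Fin K, ¬ P (O j 0) (H 0) := fun j h => (F (Edg.isoH j)).2 ⟨hOO j, h⟩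
  have hOOd : ∀ j k : Fin K, j ≠ k → ¬ P (O j 0) (O k 0) :=
    fun j k hjk h => (F (Edg.isoIso j k hjk)).2 ⟨hOO j, h⟩
  have hOW : ∀ (j : Fin K) (τ : Slt B Λ) (ε : Fin 2), ¬ P (O j 0) (W τ ε) :=
    fun j τ ε h => (F (Edg.isoSlot j τ ε)).2 ⟨hOO j, h⟩
  have hHW : ∀ τ : Slt B Λ, ¬ P (H 0) (W τ 1) := fun τ h => (F (Edg.hubSlot τ)).2 ⟨hHH, h⟩
  -- selectors
  have hZd : ∀ b : B, P (Z b) (H 0) ∨ P (Z b) (C 0) := by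
    intro b
    rcases (F (Edg.selHub b)).1 with h | h | h
    · exact Or.inl h
    · exact Or.inr h
    · exact absurd h hHC
  have hZZ : ∀ b b' : B, b ≠ b' → P (Z b) (C 0) → P (Z b') (C 0) → False := by
    intro b b' hbb h h'
    exact (F (Edg.selSel b b' hbb)).2 ⟨Setoid.trans h (Setoid.symm h'), h⟩
  -- slots
  have slotHigh : ∀ τ : Slt B Λ, P (Z τ.1) (C 0) →
      P (W τ 0) (W τ 1) ∧ ¬ P (W τ 1) (C 0) ∧ ¬ P (W τ 0) (H 0) := by
    intro τ hz
    have hwC : ¬ P (W τ 1) (C 0) := by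
      intro h
      exact (F (Edg.wz τ)).2 ⟨Setoid.trans h (Setoid.symm hz), h⟩
    have hxw : P (W τ 0) (W τ 1) := by
      rcases (F (Edg.xw τ)).1 with h | h | h
      · exact h
      · exact absurd h (hXC τ)
      · exact absurd h hwC
    refine ⟨hxw, hwC, fun h => hHW τ (Setoid.trans (Setoid.symm h) hxw)⟩
  have slotLow : ∀ τ : Slt B Λ, ¬ P (Z τ.1) (C 0) → P (Z τ.1) (H 0) →
      P (W τ 1) (C 0) ∧ P (W τ 0) (H 0) := by
    intro τ hz hzH
    have hw : P (W τ 1) (C 0) := by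
      rcases (F (Edg.wz τ)).1 with h | h | h
      · exact absurd (Setoid.symm (Setoid.trans h hzH)) (hHW τ)
      · exact h
      · exact absurd h hz
    have hx : P (W τ 0) (H 0) := by
      rcases (F (Edg.xz τ)).1 with h | h | h
      · exact Setoid.trans h hzH
      · exact absurd h (hXC τ)
      · exact absurd h hz
    exact ⟨hw, hx⟩
  have slotSep : ∀ τ υ : Slt B Λ, τ.1 = υ.1 → τ ≠ υ → P (Z τ.1) (C 0) →
      ∀ ε : Fin 2, ¬ P (W τ 0) (W υ ε) := by
    intro τ υ h1 h2 hz ε h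
    exact (F (Edg.slotSlot τ υ h1 h2 ε)).2 ⟨(slotHigh τ hz).1, h⟩
  -- pick the branch
  by_cases hex : ∃ b : B, P (Z b) (C 0)
  · obtain ⟨b0, hb0⟩ := hex
    refine ⟨some b0, Setoid.ext fun a c => ?_⟩
    have hzlow : ∀ b : B, b ≠ b0 → P (Z b) (H 0) ∧ ¬ P (Z b) (C 0) := by
      intro b hb
      have hnc : ¬ P (Z b) (C 0) := fun h => hZZ b b0 hb h hb0
      rcases hZd b with h | h
      · exact ⟨h, hnc⟩
      · exact absurd h hnc
    have L1 : ∀ a : Vtx K B Λ, P a (rep (some b0) (colf (some b0) a)) := by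
      intro a
      cases a with
      | C i => simpa [colf, rep] using hCC i 0
      | D k =>
          have : ∀ k : Fin 2, P (D k) (D 0) := by
            intro k; fin_cases k
            · exact Setoid.refl _
            · exact Setoid.symm hDD
          simpa [colf, rep] using this k
      | H j =>
          have : ∀ j : Fin 2, P (H j) (H 0) := by
            intro j; fin_cases j
            · exact Setoid.refl _
            · exact Setoid.symm hHH
          simpa [colf, rep] using this j
      | O j ε =>
          have : ∀ ε : Fin 2, P (O j ε) (O j 0) := by
            intro ε; fin_cases ε
            · exact Setoid.refl _
            · exact Setoid.symm (hOO j)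
          simpa [colf, rep] using this ε
      | Z b =>
          by_cases hb : b = b0
          · subst hb; simpa [colf, rep] using hb0
          · simpa [colf, rep, hb] using (hzlow b hb).1
      | W τ ε =>
          by_cases hτ : τ.1 = b0
          · have hz : P (Z τ.1) (C 0) := by rw [hτ]; exact hb0
            have : ∀ ε : Fin 2, P (W τ ε) (W τ 0) := by
              intro ε; fin_cases ε
              · exact Setoid.refl _
              · exact Setoid.symm (slotHigh τ hz).1
            simpa [colf, rep, hτ] using this ε
          · have hl := slotLow τ (hzlow τ.1 hτ).2 (hzlow τ.1 hτ).1
            fin_cases ε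
            · simpa [colf, rep, hτ] using hl.2
            · simpa [colf, rep, hτ] using hl.1
    have sep : ∀ u v : Col K B Λ (some b0), P (rep (some b0) u) (rep (some b0) v) → u = v := by
      have hCH : ¬ P (C 0) (H 0) := fun h => hHC (Setoid.symm h)
      have hDH : ¬ P (D 0) (H 0) := fun h => (hnD _ (Edg.hubD 0)).1 (Setoid.symm h)
      intro u v h
      rcases u with i | j | p <;> rcases v with i' | j' | p'
      · -- inl / inl
        fin_cases i <;> fin_cases i' <;> simp only [rep] at h <;> norm_num at h ⊢ <;>
          first
          | rfl
          | exact absurd h (hCD 0 0)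
          | exact absurd h hCH
          | exact absurd h (fun hh => (hCD 0 0) (Setoid.symm hh))
          | exact absurd h hDH
          | exact absurd h (fun hh => hCH (Setoid.symm hh))
          | exact absurd h (fun hh => hDH (Setoid.symm hh))
      · exfalso
        fin_cases i <;> simp only [rep] at h <;> norm_num at h <;>
          first
          | exact hOC j' 0 (Setoid.symm h)
          | exact (hnD _ (Edg.isoD j' 0)).1 (Setoid.symm h)
          | exact hOH j' (Setoid.symm h)
      · exfalso
        have hz : P (Z p'.1.1) (C 0) := by rw [p'.2]; exact hb0
        fin_cases i <;> simp only [rep] at h <;> norm_num at h <;>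
          first
          | exact hXC p'.1 (Setoid.symm h)
          | exact (hnD _ (Edg.slotD p'.1 0)).1 (Setoid.symm h)
          | exact (slotHigh p'.1 hz).2.2 (Setoid.symm h)
      · exfalso
        fin_cases i' <;> simp only [rep] at h <;> norm_num at h <;>
          first
          | exact hOC j 0 h
          | exact (hnD _ (Edg.isoD j 0)).1 h
          | exact hOH j h
      · -- iso / iso
        by_cases hjj : j = j'
        · subst hjj; rfl
        · exact absurd h (by simpa [rep] using hOOd j j' hjj)
      · exact absurd h (by simpa [rep] using hOW j p'.1 0)
      · exfalso
        have hz : P (Z p.1.1) (C 0) := by rw [p.2]; exact hb0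
        fin_cases i' <;> simp only [rep] at h <;> norm_num at h <;>
          first
          | exact hXC p.1 h
          | exact (hnD _ (Edg.slotD p.1 0)).1 h
          | exact (slotHigh p.1 hz).2.2 h
      · exact absurd h (fun hh => hOW j' p.1 0 (Setoid.symm hh))
      · -- slot / slot
        by_cases hpp : p.1 = p'.1
        · simp only [Sum.inr.injEq]
          exact Subtype.ext hpp
        · exfalso
          have hz : P (Z p.1.1) (C 0) := by rw [p.2]; exact hb0
          have h1 : p.1.1 = p'.1.1 := by rw [p.2, p'.2]
          exact slotSep p.1 p'.1 h1 hpp hz 0 (by simpa [rep] using h)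
    rw [Setoid.ker_def]
    constructor
    · intro h
      exact sep _ _ (Setoid.trans (Setoid.symm (L1 a)) (Setoid.trans h (L1 c)))
    · intro h
      have hc := L1 c
      rw [← h] at hc
      exact Setoid.trans (L1 a) (Setoid.symm hc)
  · -- no selector is high
    push_neg at hex
    refine ⟨none, Setoid.ext fun a c => ?_⟩
    have hzlow : ∀ b : B, P (Z b) (H 0) := by
      intro b
      rcases hZd b with h | h
      · exact h
      · exact absurd h (hex b)
    have hslot : ∀ τ : Slt B Λ, P (W τ 1) (C 0) ∧ P (W τ 0) (H 0) :=
      fun τ => slotLow τ (hex τ.1) (hzlow τ.1)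
    have L1 : ∀ a : Vtx K B Λ, P a (rep none (colf none a)) := by
      intro a
      cases a with
      | C i => simpa [colf, rep] using hCC i 0
      | D k =>
          have : ∀ k : Fin 2, P (D k) (D 0) := by
            intro k; fin_cases k
            · exact Setoid.refl _
            · exact Setoid.symm hDD
          simpa [colf, rep] using this k
      | H j =>
          have : ∀ j : Fin 2, P (H j) (H 0) := by
            intro j; fin_cases j
            · exact Setoid.refl _
            · exact Setoid.symm hHH
          simpa [colf, rep] using this j
      | O j ε =>
          have : ∀ ε : Fin 2, P (O j ε) (O j 0) := by
            intro ε; fin_cases ε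
            · exact Setoid.refl _
            · exact Setoid.symm (hOO j)
          simpa [colf, rep] using this ε
      | Z b => simpa [colf, rep] using hzlow b
      | W τ ε =>
          fin_cases ε
          · simpa [colf, rep] using (hslot τ).2
          · simpa [colf, rep] using (hslot τ).1
    have sep : ∀ u v : Col K B Λ none, P (rep none u) (rep none v) → u = v := by
      have hCH : ¬ P (C 0) (H 0) := fun h => hHC (Setoid.symm h)
      have hDH : ¬ P (D 0) (H 0) := fun h => (hnD _ (Edg.hubD 0)).1 (Setoid.symm h)
      intro u v h
      rcases u with i | j | p <;> rcases v with i' | j' | p'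
      · fin_cases i <;> fin_cases i' <;> simp only [rep] at h <;> norm_num at h ⊢ <;>
          first
          | rfl
          | exact absurd h (hCD 0 0)
          | exact absurd h hCH
          | exact absurd h (fun hh => (hCD 0 0) (Setoid.symm hh))
          | exact absurd h hDH
          | exact absurd h (fun hh => hCH (Setoid.symm hh))
          | exact absurd h (fun hh => hDH (Setoid.symm hh))
      · exfalso
        fin_cases i <;> simp only [rep] at h <;> norm_num at h <;>
          first
          | exact hOC j' 0 (Setoid.symm h)
          | exact (hnD _ (Edg.isoD j' 0)).1 (Setoid.symm h)
          | exact hOH j' (Setoid.symm h)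
      · exact p'.elim
      · exfalso
        fin_cases i' <;> simp only [rep] at h <;> norm_num at h <;>
          first
          | exact hOC j 0 h
          | exact (hnD _ (Edg.isoD j 0)).1 h
          | exact hOH j h
      · by_cases hjj : j = j'
        · subst hjj; rfl
        · exact absurd h (by simpa [rep] using hOOd j j' hjj)
      · exact p'.elim
      · exact p.elim
      · exact p.elim
      · exact p.elim
    rw [Setoid.ker_def]
    constructor
    · intro h
      exact sep _ _ (Setoid.trans (Setoid.symm (L1 a)) (Setoid.trans h (L1 c)))
    · intro h
      have hc := L1 c
      rw [← h] at hc
      exact Setoid.trans (L1 a) (Setoid.symm hc)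

lemma colS_inj : Function.Injective (fun o : Option B => Setoid.ker (colf (K := K) (Λ := Λ) o)) := by
  have key : ∀ (o : Option B) (b : B),
      (Setoid.ker (colf (K := K) (Λ := Λ) o)) (Z b) (C 0) ↔ o = some b := by
    intro o b
    rw [Setoid.ker_def]
    cases o with
    | none => simp [colf]
    | some b1 =>
        by_cases hb : b = b1
        · subst hb; simp [colf]
        · simp [colf, hb, eq_comm]
  intro o o' h
  have h' : Setoid.ker (colf (K := K) (Λ := Λ) o) = Setoid.ker (colf o') := h
  have hiff : ∀ b : B, o = some b ↔ o' = some b := by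
    intro b
    rw [← key o b, ← key o' b, h']
  cases o with
  | none =>
      cases o' with
      | none => rfl
      | some b => exact ((hiff b).mpr rfl).symm ▸ rfl
  | some b => exact ((hiff b).mp rfl).symm

instance actFintype [Fintype B] : ∀ o : Option B, Fintype (Act B Λ o)
  | none => (inferInstance : Fintype PEmpty)
  | some _ => Subtype.fintype _

def actEquiv (b0 : B) : Act B Λ (some b0) ≃ Fin (Λ b0) where
  toFun p := Fin.cast (congrArg Λ p.2) p.1.2
  invFun r := ⟨⟨b0, r⟩, rfl⟩
  left_inv := by
    rintro ⟨⟨b, r⟩, h⟩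
    subst h
    rfl
  right_inv r := rfl

lemma card_quot [Fintype B] (o : Option B) :
    Nat.card (Quotient (Setoid.ker (colf (K := K) (Λ := Λ) o))) =
      3 + K + (Option.elim o 0 Λ) := by
  have hsurj : Function.Surjective (colf (K := K) (Λ := Λ) o) := by
    rintro (i | j | p)
    · fin_cases i
      · exact ⟨C 0, by cases o <;> rfl⟩
      · exact ⟨D 0, by cases o <;> rfl⟩
      · exact ⟨H 0, by cases o <;> rfl⟩
    · exact ⟨O j 0, by cases o <;> rfl⟩
    · cases o with
      | none => exact p.elim
      | some b0 =>
          refine ⟨W p.1 0, ?_⟩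
          simp only [colf, p.2, dif_pos]
  rw [Nat.card_congr (Setoid.quotientKerEquivOfSurjective _ hsurj)]
  cases o with
  | none =>
      simp [Col, Nat.card_sum, Act, Nat.card_eq_fintype_card]
  | some b0 =>
      rw [show (Col K B Λ (some b0)) = (Fin 3 ⊕ Fin K ⊕ Act B Λ (some b0)) from rfl]
      rw [Nat.card_sum, Nat.card_sum, Nat.card_congr (actEquiv b0)]
      simp [Nat.card_eq_fintype_card]
      omega

end Vtx

def optEquiv {α : Type} [DecidableEq α] (a : α) : Option {b : α // b ≠ a} ≃ α where
  toFun o := o.elim a Subtype.val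
  invFun x := if h : x = a then none else some ⟨x, h⟩
  left_inv := by
    rintro (_ | ⟨b, hb⟩)
    · simp
    · simp [hb]
  right_inv x := by by_cases h : x = a <;> simp [h]

def sigEquiv {t : ℕ} (s : Fin t → ℕ) (i : Fin t) :
    {p : Σ i', Fin (s i') // p.1 = i} ≃ Fin (s i) where
  toFun p := Fin.cast (congrArg s p.2) p.1.2
  invFun r := ⟨⟨i, r⟩, rfl⟩
  left_inv := by
    rintro ⟨⟨i', r⟩, h⟩
    subst h
    rfl
  right_inv r := rfl

end Stmt5

/-- for any set `S = {n₁,…,n_t}` (`t ≥ 2`) of integers with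
`min S ≥ 3` and any positive integers `s₁,…,s_t`, there is a 3-uniform
bi-hypergraph whose feasible set is exactly `S` and which has exactly `sᵢ`
feasible partitions into `nᵢ` classes for each `i`. -/
theorem stmt5 (t : ℕ) (ht : 2 ≤ t) (n : Fin t → ℕ)
    (hinj : Function.Injective n) (h3 : ∀ i, 3 ≤ n i)
    (s : Fin t → ℕ) (hs : ∀ i, 0 < s i) :
    ∃ (X : Type) (_ : Fintype X) (E : Set (Finset X)),
      (∀ b ∈ E, b.card = 3) ∧
      ({k | ∃ P : Setoid X, ProperSetoid E P ∧ Nat.card (Quotient P) = k}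
        = Set.range n) ∧
      ∀ i : Fin t,
        Nat.card {P : Setoid X // ProperSetoid E P ∧ Nat.card (Quotient P) = n i}
          = s i := by
  open Stmt5 Stmt5.Vtx in
  obtain ⟨i0, -, hi0⟩ :=
    Finset.exists_min_image (Finset.univ : Finset (Fin t)) n ⟨⟨0, by omega⟩, Finset.mem_univ _⟩
  have hmin : ∀ i, n i0 ≤ n i := fun i => hi0 i (Finset.mem_univ i)
  set σ0 : Σ i : Fin t, Fin (s i) := ⟨i0, ⟨0, hs i0⟩⟩ with hσ0
  let Sel : Type := {p : Σ i : Fin t, Fin (s i) // p ≠ σ0}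
  let Λ : Sel → ℕ := fun σ => n σ.1.1 - n i0
  let K' : ℕ := n i0 - 3
  let ν : Option Sel → Fin t := fun o => (o.elim σ0 Subtype.val).1
  have hcard : ∀ o : Option Sel,
      Nat.card (Quotient (Setoid.ker (Vtx.colf (K := K') (Λ := Λ) o))) = n (ν o) := by
    intro o
    rw [Vtx.card_quot]
    cases o with
    | none =>
        have := h3 i0
        show 3 + K' + 0 = n i0
        omega
    | some σ =>
        have h1 := h3 i0
        have h2 := hmin σ.1.1
        show 3 + K' + (n σ.1.1 - n i0) = n σ.1.1
        omega
  refine ⟨Vtx K' Sel Λ, inferInstance, Vtx.ES, ?_, ?_, ?_⟩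
  · rintro e ⟨a, b, c, hedg, rfl⟩
    exact Vtx.card_three hedg
  · apply Set.eq_of_subset_of_subset
    · rintro k ⟨P, hP, rfl⟩
      obtain ⟨o, rfl⟩ := Vtx.classify hP
      exact ⟨ν o, (hcard o).symm⟩
    · rintro k ⟨i, rfl⟩
      by_cases h : i = i0
      · exact ⟨Setoid.ker (Vtx.colf none), Vtx.properS none, by rw [hcard]; simp [ν, h, hσ0]⟩
      · have hne : (⟨i, ⟨0, hs i⟩⟩ : Σ i', Fin (s i')) ≠ σ0 := by
          intro hcontr
          exact h (congrArg Sigma.fst hcontr)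
        exact ⟨Setoid.ker (Vtx.colf (some ⟨⟨i, ⟨0, hs i⟩⟩, hne⟩)), Vtx.properS _,
          by rw [hcard]; rfl⟩
  · intro i
    classical
    let f : {o : Option Sel // n (ν o) = n i} →
        {P : Setoid (Vtx K' Sel Λ) // ProperSetoid Vtx.ES P ∧
          Nat.card (Quotient P) = n i} :=
      fun o => ⟨Setoid.ker (Vtx.colf o.1), Vtx.properS o.1, by rw [hcard]; exact o.2⟩
    have hbij : Function.Bijective f := by
      constructor
      · rintro ⟨o, ho⟩ ⟨o', ho'⟩ hoo
        have : Setoid.ker (Vtx.colf (K := K') (Λ := Λ) o) = Setoid.ker (Vtx.colf o') :=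
          congrArg Subtype.val hoo
        exact Subtype.ext (Vtx.colS_inj this)
      · rintro ⟨P, hP, hc⟩
        obtain ⟨o, rfl⟩ := Vtx.classify hP
        exact ⟨⟨o, by rw [← hcard o]; exact hc⟩, rfl⟩
    have e1 : {o : Option Sel // n (ν o) = n i} ≃ {o : Option Sel // ν o = i} :=
      Equiv.subtypeEquivRight (fun o => ⟨fun h => hinj h, fun h => by rw [h]⟩)
    have e2 : {o : Option Sel // ν o = i} ≃ {p : Σ i', Fin (s i') // p.1 = i} :=
      (Stmt5.optEquiv σ0).subtypeEquiv (fun o => Iff.rfl)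
    rw [← Nat.card_eq_of_bijective f hbij, Nat.card_congr (e1.trans e2),
      Nat.card_congr (Stmt5.sigEquiv s i), Nat.card_eq_fintype_card, Fintype.card_fin]
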